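/- arXiv:q-alg/9702021 — 2 statements merged into one kernel-verified Lean document; each statement's English description precedes it below -/
import Mathlib

section
/- Let (α, β) be a Bailey pair relative to a = q^ℓ, where ℓ is a non-negative integer; i.e. β_L = Σ_{r=0}^{L} α_r / ((q)_{L-r} (q^{ℓ+1};q)_{L+r}) for all integers L ≥ 0. Then for every integer L ≥ 0 one has Σ_{s=0, s ≡ L+ℓ (mod 2)}^{L-ℓ} q^{s(s-1)/2} / ((q)_ℓ (q)_s) · β_{(L-s-ℓ)/2} = Σ_{r=0}^{⌊(L-ℓ)/2⌋} Q_1(L, 2r+ℓ, q) · α_r. (For ℓ > L both sides are empty sums, i.e. 0.) -/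
open Finset

noncomputable section

/-- The field `F = RatFunc ℚ` of rational functions over `ℚ` in the variable `t`,
where `t` plays the role of `q^(1/2)`. -/
abbrev F : Type := RatFunc ℚ

/-- The variable `t = q^(1/2)`. -/
def t : F := RatFunc.X

/-- `q = t^2`. -/
def q : F := t ^ 2

/-- The Pochhammer symbol `(a; b)_n = ∏_{k=0}^{n-1} (1 - a bᵏ)`, set equal to `0` for
negative `n` (so that any term containing a factor `1/(a;b)_n` with `n < 0` vanishes). -/
def poch (b a : F) (n : ℤ) : F :=
  if n < 0 then 0 else ∏ k ∈ Finset.range n.toNat, (1 - a * b ^ k)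

/-- The `q`-trinomial coefficient `((L; B; qq))_{A,2}` with base `qq`:
`∑_j qq^(j(j+B)) (qq)_L / ((qq)_j (qq)_{j+A} (qq)_{L-2j-A})`; the sum is finite since
terms with a negative Pochhammer index in the denominator vanish. -/
def trinom (qq : F) (L : ℕ) (B A : ℤ) : F :=
  ∑ j ∈ Finset.range (L + 1),
    qq ^ ((j : ℤ) * ((j : ℤ) + B)) * poch qq qq (L : ℤ) /
      (poch qq qq (j : ℤ) * poch qq qq ((j : ℤ) + A) *
        poch qq qq ((L : ℤ) - 2 * (j : ℤ) - A))

/-- `T_n(L, A, q) = q^((L(L-n) - A(A-n))/2) ((L; A-n; q⁻¹))_{A,2}`; note `t ^ m = q ^ (m/2)`. -/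
def T (n : ℤ) (L : ℕ) (A : ℤ) : F :=
  t ^ ((L : ℤ) * ((L : ℤ) - n) - A * (A - n)) * trinom q⁻¹ L (A - n) A

/-- `Q_n(L, A, q) = T_n(L, A, q) / (q)_L`. -/
def Q (n : ℤ) (L : ℕ) (A : ℤ) : F := T n L A / poch q q (L : ℤ)


set_option maxHeartbeats 2000000

/- ### Auxiliary lemmas -/

lemma ht : (t : F) ≠ 0 := RatFunc.X_ne_zero
lemma hq : (q : F) ≠ 0 := pow_ne_zero 2 ht

lemma t_pow_ne_one (m : ℕ) (hm : 0 < m) : (t : F) ^ m ≠ 1 := by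
  intro h
  have h1 : ((Polynomial.X : Polynomial ℚ) ^ m) = 1 := by
    apply RatFunc.algebraMap_injective ℚ
    rw [map_pow, map_one, RatFunc.algebraMap_X]
    exact h
  have h2 := congrArg Polynomial.natDegree h1
  rw [Polynomial.natDegree_X_pow, Polynomial.natDegree_one] at h2
  omega

lemma poch_natCast (b a : F) (n : ℕ) :
    poch b a (n : ℤ) = ∏ k ∈ Finset.range n, (1 - a * b ^ k) := by
  simp [poch]

lemma poch_neg (b a : F) (n : ℤ) (h : n < 0) : poch b a n = 0 := by simp [poch, h]

lemma poch_zero (b a : F) : poch b a 0 = 1 := by simp [poch]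

lemma poch_succ (b a : F) (n : ℕ) :
    poch b a ((n : ℤ) + 1) = poch b a n * (1 - a * b ^ n) := by
  rw [show ((n : ℤ) + 1) = ((n + 1 : ℕ) : ℤ) by push_cast; ring, poch_natCast, poch_natCast,
    Finset.prod_range_succ]

lemma poch_q_ne_zero (n : ℕ) (m : ℕ) : poch q (q ^ (m+1)) (n : ℤ) ≠ 0 := by
  rw [poch_natCast]
  refine Finset.prod_ne_zero_iff.2 fun k _ => ?_
  have he : q ^ (m+1) * q ^ k = t ^ (2*(m+1+k)) := by rw [q]; ring
  rw [he]
  intro h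
  exact t_pow_ne_one _ (by omega) ((sub_eq_zero.mp h).symm)

lemma hPq (n : ℕ) : poch q q (n : ℤ) ≠ 0 := by
  have := poch_q_ne_zero n 0
  simpa using this

lemma poch_merge (m n : ℕ) :
    poch q q m * poch q (q ^ (m+1)) n = poch q q ((m + n : ℕ) : ℤ) := by
  induction n with
  | zero => simp [poch_zero]
  | succ n ih =>
      have h1 : ((n : ℤ) + 1) = (((n+1 : ℕ)) : ℤ) := by push_cast; ring
      rw [show ((m + (n+1) : ℕ) : ℤ) = ((m + n : ℕ) : ℤ) + 1 by push_cast; ring,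
        poch_succ, ← ih, show ((n+1 : ℕ) : ℤ) = (n : ℤ) + 1 by push_cast; ring, poch_succ]
      have : q ^ (m+1) * q ^ n = q * q ^ (m+n) := by ring
      rw [mul_assoc, this]

lemma poch_inv (n : ℕ) :
    poch q⁻¹ q⁻¹ (n : ℤ) = (-1) ^ n * (t ^ (n*(n+1)))⁻¹ * poch q q n := by
  induction n with
  | zero => simp [poch_zero]
  | succ n ih =>
      rw [show ((n+1 : ℕ) : ℤ) = (n : ℤ) + 1 by push_cast; ring, poch_succ, poch_succ, ih]
      have hqn : (q : F) ^ (n+1) ≠ 0 := pow_ne_zero _ hq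
      have hx : (q : F) * q ^ n = t ^ (2*(n+1)) := by rw [q]; ring
      have h2 : (1 - q⁻¹ * q⁻¹ ^ n) = (-1) * (t ^ (2*(n+1)))⁻¹ * (1 - q * q ^ n) := by
        have hy : (q:F)⁻¹ * q⁻¹ ^ n = (t ^ (2*(n+1)))⁻¹ := by
          rw [inv_pow, ← mul_inv, hx]
        rw [hy]
        have hX : (t:F) ^ (2*(n+1)) ≠ 0 := pow_ne_zero _ ht
        field_simp
        rw [hx]; ring
      rw [h2]
      have hT : (t:F) ^ ((n+1)*(n+2)) = t ^ (n*(n+1)) * t ^ (2*(n+1)) := by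
        rw [← pow_add]; ring_nf
      field_simp [hT]
      ring

lemma sq_np (n : ℕ) : ((-1:F)^n)^2 = 1 := by
  rw [← pow_mul, mul_comm, pow_mul, neg_one_sq, one_pow]

lemma p4_np (n : ℕ) : ((-1:F)^n)^4 = 1 := by
  rw [show (4:ℕ) = 2*2 from rfl, pow_mul, sq_np, one_pow]

def Pq (n : ℕ) : F := poch q q (n:ℤ)
lemma pqdef (n : ℕ) : poch q q ((n:ℕ):ℤ) = Pq n := rfl
lemma hPq' (n : ℕ) : Pq n ≠ 0 := hPq n

lemma key_term (j r ℓ c : ℕ) :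
    t ^ ((c:ℤ) * ((c:ℤ) - 1)) / (poch q q (ℓ:ℤ) * poch q q (c:ℤ)) *
      (1 / (poch q q (j:ℤ) * poch q (q^(ℓ+1)) ((j+2*r:ℕ):ℤ)))
    = t ^ (((2*j+2*r+ℓ+c:ℕ):ℤ) * (((2*j+2*r+ℓ+c:ℕ):ℤ) - 1)
          - (2*(r:ℤ)+(ℓ:ℤ)) * ((2*(r:ℤ)+(ℓ:ℤ)) - 1)) *
      (q⁻¹ ^ ((j:ℤ) * ((j:ℤ) + (2*(r:ℤ)+(ℓ:ℤ) - 1))) * poch q⁻¹ q⁻¹ ((2*j+2*r+ℓ+c:ℕ):ℤ) /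
        (poch q⁻¹ q⁻¹ (j:ℤ) * poch q⁻¹ q⁻¹ ((j:ℤ) + (2*(r:ℤ)+(ℓ:ℤ))) *
         poch q⁻¹ q⁻¹ (((2*j+2*r+ℓ+c:ℕ):ℤ) - 2*(j:ℤ) - (2*(r:ℤ)+(ℓ:ℤ))))) /
      poch q q ((2*j+2*r+ℓ+c:ℕ):ℤ) := by
  have h1 : (((2*j+2*r+ℓ+c:ℕ):ℤ) - 2*(j:ℤ) - (2*(r:ℤ)+(ℓ:ℤ))) = ((c:ℕ):ℤ) := by push_cast; ring
  have h2 : ((j:ℤ) + (2*(r:ℤ)+(ℓ:ℤ))) = ((j+2*r+ℓ:ℕ):ℤ) := by push_cast; ring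
  rw [h1, h2, poch_inv (2*j+2*r+ℓ+c), poch_inv j, poch_inv (j+2*r+ℓ), poch_inv c]
  have he : (q⁻¹:F) ^ ((j:ℤ) * ((j:ℤ) + (2*(r:ℤ)+(ℓ:ℤ) - 1))) = t ^ (j*2) / t ^ (j*(j+2*r+ℓ)*2) := by
    rw [inv_zpow, ← zpow_neg,
      show -((j:ℤ) * ((j:ℤ) + (2*(r:ℤ)+(ℓ:ℤ) - 1))) = ((j:ℕ):ℤ) - ((j*(j+2*r+ℓ):ℕ):ℤ) by push_cast; ring,
      zpow_sub₀ hq, zpow_natCast, zpow_natCast, q, ← pow_mul, ← pow_mul, mul_comm 2 j, mul_comm 2 (j*(j+2*r+ℓ))]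
  rw [he]
  have hE : (t:F) ^ (((2*j+2*r+ℓ+c:ℕ):ℤ) * (((2*j+2*r+ℓ+c:ℕ):ℤ) - 1)
        - (2*(r:ℤ)+(ℓ:ℤ)) * ((2*(r:ℤ)+(ℓ:ℤ)) - 1))
      = t ^ ((2*j+2*r+ℓ+c)*(2*j+2*r+ℓ+c) + 2*r+ℓ) / t ^ ((2*j+2*r+ℓ+c) + (2*r+ℓ)*(2*r+ℓ)) := by
    rw [show (((2*j+2*r+ℓ+c:ℕ):ℤ) * (((2*j+2*r+ℓ+c:ℕ):ℤ) - 1)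
        - (2*(r:ℤ)+(ℓ:ℤ)) * ((2*(r:ℤ)+(ℓ:ℤ)) - 1))
        = (((2*j+2*r+ℓ+c)*(2*j+2*r+ℓ+c) + 2*r+ℓ : ℕ):ℤ) - (((2*j+2*r+ℓ+c) + (2*r+ℓ)*(2*r+ℓ) : ℕ):ℤ) by push_cast; ring,
      zpow_sub₀ ht, zpow_natCast, zpow_natCast]
  rw [hE]
  have hc : (t:F) ^ ((c:ℤ) * ((c:ℤ) - 1)) = t ^ (c*c) / t ^ c := by
    rw [show ((c:ℤ) * ((c:ℤ) - 1)) = ((c*c:ℕ):ℤ) - ((c:ℕ):ℤ) by push_cast; ring,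
      zpow_sub₀ ht, zpow_natCast, zpow_natCast]
  rw [hc]
  have hmerge : poch q q (ℓ:ℤ) * poch q (q^(ℓ+1)) ((j+2*r:ℕ):ℤ) = poch q q ((j+2*r+ℓ:ℕ):ℤ) := by
    rw [show ((j+2*r+ℓ:ℕ):ℤ) = ((ℓ+(j+2*r):ℕ):ℤ) by push_cast; ring, ← poch_merge]
  simp only [pqdef] at hmerge ⊢
  have hp2 : poch q (q^(ℓ+1)) ((j+2*r:ℕ):ℤ) = Pq (j+2*r+ℓ) / Pq ℓ := by
    rw [← hmerge]; field_simp [hPq']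
  rw [hp2]
  field_simp [hPq', ht, pow_ne_zero]
  ring_nf

lemma key (ℓ r L : ℕ) (h : 2*r+ℓ ≤ L) :
    (∑ s ∈ Finset.range (L+1),
      if (s:ℤ) ≤ (L:ℤ) - (ℓ:ℤ) ∧ (s+L+ℓ) % 2 = 0 then
        t ^ ((s:ℤ)*((s:ℤ)-1)) / (poch q q (ℓ:ℤ) * poch q q (s:ℤ)) *
          (1 / (poch q q ((((L-s-ℓ)/2 : ℕ):ℤ) - (r:ℤ)) *
             poch q (q^(ℓ+1)) ((((L-s-ℓ)/2 : ℕ):ℤ) + (r:ℤ))))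
      else 0) = Q 1 L (2*(r:ℤ)+(ℓ:ℤ)) := by
  rw [Q, T, trinom, Finset.mul_sum, Finset.sum_div]
  rw [← Finset.sum_subset
      (Finset.filter_subset (fun s => s + (2*r+ℓ) ≤ L ∧ (s+L+ℓ) % 2 = 0) (Finset.range (L+1)))
      (by
        intro s hs hns
        by_cases hC : (s:ℤ) ≤ (L:ℤ) - (ℓ:ℤ) ∧ (s+L+ℓ) % 2 = 0
        · rw [if_pos hC]
          obtain ⟨hC1, hC2⟩ := hC
          have hsle : s + ℓ ≤ L := by omega
          have hm : (L-s-ℓ)/2 < r := by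
            simp only [Finset.mem_filter, Finset.mem_range] at hns hs
            omega
          rw [poch_neg q q ((((L-s-ℓ)/2 : ℕ):ℤ) - (r:ℤ)) (by omega), zero_mul, div_zero, mul_zero]
        · rw [if_neg hC])]
  rw [← Finset.sum_subset
      (Finset.filter_subset (fun j => 2*j + (2*r+ℓ) ≤ L) (Finset.range (L+1)))
      (by
        intro j hj hnj
        simp only [Finset.mem_filter, Finset.mem_range] at hnj hj
        have : ((L:ℤ) - 2*(j:ℤ) - (2*(r:ℤ)+(ℓ:ℤ))) < 0 := by omega
        rw [poch_neg q⁻¹ q⁻¹ _ this, mul_zero, div_zero, mul_zero, zero_div])]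
  refine Finset.sum_nbij' (fun s => (L - s - (2*r+ℓ))/2) (fun j => L - (2*j + (2*r+ℓ)))
    ?_ ?_ ?_ ?_ ?_
  · intro s hs
    simp only [Finset.mem_filter, Finset.mem_range] at hs ⊢
    omega
  · intro j hj
    simp only [Finset.mem_filter, Finset.mem_range] at hj ⊢
    omega
  · intro s hs
    simp only [Finset.mem_filter, Finset.mem_range] at hs
    omega
  · intro j hj
    simp only [Finset.mem_filter, Finset.mem_range] at hj
    omega
  · intro s hs
    simp only [Finset.mem_filter, Finset.mem_range] at hs
    obtain ⟨hs1, hs2, hs3⟩ := hs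
    set j := (L - s - (2*r+ℓ))/2 with hj
    have h2j : 2*j + 2*r + ℓ + s = L := by omega
    have hC : (s:ℤ) ≤ (L:ℤ) - (ℓ:ℤ) ∧ (s+L+ℓ) % 2 = 0 := ⟨by omega, hs3⟩
    rw [if_pos hC]
    have hm : (L-s-ℓ)/2 = j + r := by omega
    rw [hm, show (((j+r:ℕ)):ℤ) - (r:ℤ) = ((j:ℕ):ℤ) by push_cast; ring,
      show (((j+r:ℕ)):ℤ) + (r:ℤ) = ((j+2*r:ℕ):ℤ) by push_cast; ring]
    rw [show L = 2*j+2*r+ℓ+s by omega]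
    exact key_term j r ℓ s

/-- Lemma 2 of Warnaar's note, case `n = 1`: each ordinary Bailey pair relative to
`a = q^ℓ` gives rise to the stated trinomial identity. -/
theorem binomial_to_trinomial_n_one (ℓ : ℕ) (α β : ℕ → F)
    (hBP : ∀ L : ℕ, β L = ∑ r ∈ Finset.range (L + 1),
      α r / (poch q q ((L : ℤ) - (r : ℤ)) * poch q (q ^ (ℓ + 1)) ((L : ℤ) + (r : ℤ)))) :
    ∀ L : ℕ,
      (∑ s ∈ Finset.range (L + 1),
        if (s : ℤ) ≤ (L : ℤ) - (ℓ : ℤ) ∧ (s + L + ℓ) % 2 = 0 then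
          t ^ ((s : ℤ) * ((s : ℤ) - 1)) / (poch q q (ℓ : ℤ) * poch q q (s : ℤ)) *
            β ((L - s - ℓ) / 2)
        else 0) =
      ∑ r ∈ Finset.range (L + 1),
        if 2 * r + ℓ ≤ L then Q 1 L (2 * (r : ℤ) + (ℓ : ℤ)) * α r else 0 := by
  intro L
  have hstep : ∀ s ∈ Finset.range (L+1),
      (if (s : ℤ) ≤ (L : ℤ) - (ℓ : ℤ) ∧ (s + L + ℓ) % 2 = 0 then
          t ^ ((s : ℤ) * ((s : ℤ) - 1)) / (poch q q (ℓ : ℤ) * poch q q (s : ℤ)) *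
            β ((L - s - ℓ) / 2)
        else 0) =
      ∑ r ∈ Finset.range (L+1),
        (if (s : ℤ) ≤ (L : ℤ) - (ℓ : ℤ) ∧ (s + L + ℓ) % 2 = 0 then
          t ^ ((s : ℤ) * ((s : ℤ) - 1)) / (poch q q (ℓ : ℤ) * poch q q (s : ℤ)) *
            (1 / (poch q q ((((L-s-ℓ)/2 : ℕ):ℤ) - (r:ℤ)) *
               poch q (q^(ℓ+1)) ((((L-s-ℓ)/2 : ℕ):ℤ) + (r:ℤ))))
         else 0) * α r := by
    intro s _
    by_cases hC : (s : ℤ) ≤ (L : ℤ) - (ℓ : ℤ) ∧ (s + L + ℓ) % 2 = 0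
    · rw [if_pos hC]
      simp only [if_pos hC]
      rw [hBP ((L-s-ℓ)/2)]
      rw [Finset.sum_subset (Finset.range_subset_range.2 (by omega : (L-s-ℓ)/2 + 1 ≤ L + 1))
          (by
            intro r _ hr
            simp only [Finset.mem_range] at hr
            rw [poch_neg q q ((((L-s-ℓ)/2 : ℕ):ℤ) - (r:ℤ)) (by omega), zero_mul, div_zero])]
      rw [Finset.mul_sum]
      refine Finset.sum_congr rfl fun r _ => ?_
      ring
    · rw [if_neg hC]
      simp only [if_neg hC]
      simp
  rw [Finset.sum_congr rfl hstep, Finset.sum_comm]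
  refine Finset.sum_congr rfl fun r _ => ?_
  by_cases hr : 2 * r + ℓ ≤ L
  · rw [if_pos hr, ← Finset.sum_mul, ← key ℓ r L hr]
  · rw [if_neg hr, ← Finset.sum_mul]
    convert zero_mul (α r)
    refine Finset.sum_eq_zero fun s _ => ?_
    by_cases hC : (s : ℤ) ≤ (L : ℤ) - (ℓ : ℤ) ∧ (s + L + ℓ) % 2 = 0
    · rw [if_pos hC]
      obtain ⟨hC1, hC2⟩ := hC
      rw [poch_neg q q ((((L-s-ℓ)/2 : ℕ):ℤ) - (r:ℤ)) (by omega), zero_mul, div_zero, mul_zero]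
    · rw [if_neg hC]


end
end

section
/- For all integers L ≥ 0 and A with -L ≤ A ≤ L, the normalized q-trinomial coefficient Q_0(L,A,q) = T_0(L,A,q)/(q)_L admits the representation Q_0(L,A,q) = Σ_{s=0, s ≡ L+A (mod 2)}^{∞} q^{s²/2} / ((q)_{(L-A-s)/2} (q)_{(L+A-s)/2} (q)_s), where the sum is effectively finite since terms with a negative Pochhammer index in a denominator vanish. -/
open Finset

noncomputable section

lemma t_ne_zero : t ≠ 0 := RatFunc.X_ne_zero
lemma q_ne_zero : q ≠ 0 := pow_ne_zero _ t_ne_zero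
lemma X_pow_ne_one (m : ℕ) (hm : m ≠ 0) : (RatFunc.X : F) ^ m ≠ 1 := by
  intro h
  have h2 : (Polynomial.X : Polynomial ℚ) ^ m = 1 := by
    apply RatFunc.algebraMap_injective (K := ℚ)
    rw [map_pow, map_one, RatFunc.algebraMap_X]
    exact h
  have := congrArg Polynomial.natDegree h2
  simp [Polynomial.natDegree_X_pow] at this
  exact hm this
lemma q_pow_ne_one (k : ℕ) : q * q ^ k ≠ 1 := by
  have : q * q ^ k = (RatFunc.X : F) ^ (2*(k+1)) := by
    rw [q, t, ← pow_succ', ← pow_mul, Nat.mul_comm]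
  rw [this]; exact X_pow_ne_one _ (by omega)
lemma one_sub_ne (k : ℕ) : (1 : F) - q * q ^ k ≠ 0 := by
  intro h; exact q_pow_ne_one k (sub_eq_zero.mp h).symm
end
noncomputable section
def P (n : ℕ) : F := ∏ k ∈ Finset.range n, (1 - q * q ^ k)
lemma P_ne_zero (n : ℕ) : P n ≠ 0 :=
  Finset.prod_ne_zero_iff.mpr fun k _ => one_sub_ne k
lemma poch_nat (n : ℕ) : poch q q (n : ℤ) = P n := by
  simp [poch, P]
lemma poch_neg_s4 {n : ℤ} (h : n < 0) : poch q⁻¹ q⁻¹ n = 0 := if_pos h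
lemma poch_q_neg {n : ℤ} (h : n < 0) : poch q q n = 0 := if_pos h
def Pinv (n : ℕ) : F := ∏ k ∈ Finset.range n, (1 - q⁻¹ * q⁻¹ ^ k)
lemma pochinv_nat (n : ℕ) : poch q⁻¹ q⁻¹ (n : ℤ) = Pinv n := by
  simp [poch, Pinv]
lemma step (n : ℕ) : (1 : F) - q⁻¹ * q⁻¹ ^ n = -(t ^ (-(2*(n:ℤ)+2))) * (1 - q * q ^ n) := by
  have h : t ^ (-(2*(n:ℤ)+2)) = (q * q ^ n)⁻¹ := by
    rw [show (-(2*(n:ℤ)+2)) = -((2*n+2 : ℕ) : ℤ) by push_cast; ring, zpow_neg,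
      zpow_natCast, q, ← pow_mul]
    congr 1
    ring
  rw [h, inv_pow]
  rw [show (q⁻¹ : F) * (q ^ n)⁻¹ = (q * q ^ n)⁻¹ by rw [mul_inv]]
  have hne : q * q ^ n ≠ 0 := mul_ne_zero q_ne_zero (pow_ne_zero n q_ne_zero)
  field_simp
  rw [sub_div, div_self hne]; ring
lemma Pinv_eq (n : ℕ) : Pinv n = (-1)^n * t ^ (-((n:ℤ)*((n:ℤ)+1))) * P n := by
  induction n with
  | zero => simp [Pinv, P]
  | succ n ih =>
    rw [Pinv, Finset.prod_range_succ, ← Pinv, ih, step]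
    rw [show P (n+1) = P n * (1 - q * q ^ n) from Finset.prod_range_succ _ n]
    rw [show (-((↑(n+1):ℤ) * ((↑(n+1):ℤ)+1))) = -((n:ℤ)*((n:ℤ)+1)) + (-(2*(n:ℤ)+2)) by
      push_cast; ring, zpow_add₀ t_ne_zero, pow_succ]
    ring
end
noncomputable section
lemma qinv_zpow (z : ℤ) : (q⁻¹ : F) ^ z = t ^ (-2 * z) := by
  have h : (q⁻¹ : F) = t ^ (-2 : ℤ) := by
    rw [q, ← zpow_natCast t 2, ← zpow_neg]; norm_num
  rw [h, ← zpow_mul]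
end
noncomputable section
lemma term_eq (L : ℕ) (A : ℤ) (j : ℕ) (hj : j ≤ L) :
    t ^ ((L:ℤ)*(L:ℤ) - A*A) * ((q⁻¹) ^ ((j:ℤ)*((j:ℤ)+A)) * poch q⁻¹ q⁻¹ (L:ℤ) /
        (poch q⁻¹ q⁻¹ (j:ℤ) * poch q⁻¹ q⁻¹ ((j:ℤ)+A) * poch q⁻¹ q⁻¹ ((L:ℤ)-2*(j:ℤ)-A))) /
      poch q q (L:ℤ)
    = t ^ (((L:ℤ)-2*(j:ℤ)-A)^2) /
        (poch q q (j:ℤ) * poch q q ((j:ℤ)+A) * poch q q ((L:ℤ)-2*(j:ℤ)-A)) := by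
  by_cases h1 : (j:ℤ) + A < 0
  · rw [poch_neg_s4 h1, poch_q_neg h1]; simp
  by_cases h2 : (L:ℤ) - 2*(j:ℤ) - A < 0
  · rw [poch_neg_s4 h2, poch_q_neg h2]; simp
  push_neg at h1 h2
  set a := ((j:ℤ) + A).toNat with ha'
  set m := ((L:ℤ) - 2*(j:ℤ) - A).toNat with hm'
  have ha : ((a:ℤ)) = (j:ℤ) + A := Int.toNat_of_nonneg h1
  have hm : ((m:ℤ)) = (L:ℤ) - 2*(j:ℤ) - A := Int.toNat_of_nonneg h2
  have hL : j + a + m = L := by omega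
  rw [← ha, ← hm, pochinv_nat, pochinv_nat, pochinv_nat, pochinv_nat,
    poch_nat, poch_nat, poch_nat, poch_nat, Pinv_eq, Pinv_eq, Pinv_eq, Pinv_eq, qinv_zpow]
  have hX : ∀ (n : ℕ) (d : ℤ), ((-1:F))^n * t^d * P n ≠ 0 := fun n d =>
    mul_ne_zero (mul_ne_zero (pow_ne_zero _ (by norm_num)) (zpow_ne_zero _ t_ne_zero))
      (P_ne_zero n)
  have hD1 : ((-1:F))^j * t^(-((j:ℤ)*((j:ℤ)+1))) * P j * ((-1)^a * t^(-((a:ℤ)*((a:ℤ)+1))) * P a) *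
      ((-1)^m * t^(-((m:ℤ)*((m:ℤ)+1))) * P m) * P L ≠ 0 :=
    mul_ne_zero (mul_ne_zero (mul_ne_zero (hX j _) (hX a _)) (hX m _)) (P_ne_zero L)
  have hD2 : P j * P a * P m ≠ 0 :=
    mul_ne_zero (mul_ne_zero (P_ne_zero j) (P_ne_zero a)) (P_ne_zero m)
  rw [← mul_div_assoc, div_div, div_eq_div_iff hD1 hD2]
  have key : (t:F)^((L:ℤ)*(L:ℤ) - A*A) * t^(-2*((j:ℤ)*(a:ℤ))) * t^(-((L:ℤ)*((L:ℤ)+1)))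
      = t^((m:ℤ)^2) * t^(-((j:ℤ)*((j:ℤ)+1))) * t^(-((a:ℤ)*((a:ℤ)+1))) * t^(-((m:ℤ)*((m:ℤ)+1))) := by
    rw [← zpow_add₀ t_ne_zero, ← zpow_add₀ t_ne_zero, ← zpow_add₀ t_ne_zero,
      ← zpow_add₀ t_ne_zero, ← zpow_add₀ t_ne_zero]
    congr 1
    rw [ha, hm]; ring
  have hsgn : ((-1:F))^L = (-1)^j * (-1)^a * (-1)^m := by rw [← hL, pow_add, pow_add]
  linear_combination ((-1:F)^L * (P L * P j * P a * P m)) * key +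
    ((t:F)^((m:ℤ)^2) * t^(-((j:ℤ)*((j:ℤ)+1))) * t^(-((a:ℤ)*((a:ℤ)+1))) * t^(-((m:ℤ)*((m:ℤ)+1))) *
      (P L * P j * P a * P m)) * hsgn
end
noncomputable section

/-- The fermionic representation of the normalized `q`-trinomial coefficient `Q_0(L,A,q)`
(equations (2.58)-(2.59) of Andrews-Baxter). The sum over `s` is effectively finite:
all terms with `s > L` vanish, so it is truncated at `s = L`. -/

theorem Q_zero_representation :
    ∀ (L : ℕ) (A : ℤ), -(L : ℤ) ≤ A → A ≤ (L : ℤ) →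
      Q 0 L A = ∑ s ∈ Finset.range (L + 1),
        if ((s : ℤ) + (L : ℤ) + A) % 2 = 0 then
          t ^ (s ^ 2) /
            (poch q q (((L : ℤ) - A - (s : ℤ)) / 2) *
              poch q q (((L : ℤ) + A - (s : ℤ)) / 2) * poch q q (s : ℤ))
        else 0 := by
  intro L A hA1 hA2
  have lhs_eq : Q 0 L A = ∑ j ∈ Finset.range (L+1),
      t ^ (((L:ℤ)-2*(j:ℤ)-A)^2) /
        (poch q q (j:ℤ) * poch q q ((j:ℤ)+A) * poch q q ((L:ℤ)-2*(j:ℤ)-A)) := by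
    unfold Q T trinom
    simp only [sub_zero]
    rw [Finset.mul_sum, Finset.sum_div]
    refine Finset.sum_congr rfl fun j hj => ?_
    exact term_eq L A j (by simpa using Nat.lt_succ_iff.mp (Finset.mem_range.mp hj))
  rw [lhs_eq]
  -- restrict both sums to where terms are nonzero
  have e1 : ∑ j ∈ (Finset.range (L+1)).filter (fun (j : ℕ) => 0 ≤ (j:ℤ)+A ∧ 2*(j:ℤ)+A ≤ (L:ℤ)),
      (t ^ (((L:ℤ)-2*(j:ℤ)-A)^2) /
        (poch q q (j:ℤ) * poch q q ((j:ℤ)+A) * poch q q ((L:ℤ)-2*(j:ℤ)-A)) : F)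
      = ∑ j ∈ Finset.range (L+1),
      t ^ (((L:ℤ)-2*(j:ℤ)-A)^2) /
        (poch q q (j:ℤ) * poch q q ((j:ℤ)+A) * poch q q ((L:ℤ)-2*(j:ℤ)-A)) :=
    Finset.sum_filter_of_ne
    (fun j hj hne => by
      by_contra hc
      apply hne
      rcases not_and_or.mp hc with h | h
      · push_neg at h
        rw [poch_q_neg (by omega : (j:ℤ)+A < 0)]
        simp
      · push_neg at h
        rw [poch_q_neg (by omega : (L:ℤ)-2*(j:ℤ)-A < 0)]
        simp)
  have e2 : ∑ s ∈ (Finset.range (L+1)).filter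
      (fun (s : ℕ) => ((s:ℤ)+(L:ℤ)+A) % 2 = 0 ∧ (s:ℤ) ≤ (L:ℤ)-A ∧ (s:ℤ) ≤ (L:ℤ)+A),
      (if ((s : ℤ) + (L : ℤ) + A) % 2 = 0 then
          t ^ (s ^ 2) /
            (poch q q (((L : ℤ) - A - (s : ℤ)) / 2) *
              poch q q (((L : ℤ) + A - (s : ℤ)) / 2) * poch q q (s : ℤ))
        else 0)
      = ∑ s ∈ Finset.range (L+1),
        if ((s : ℤ) + (L : ℤ) + A) % 2 = 0 then
          t ^ (s ^ 2) /
            (poch q q (((L : ℤ) - A - (s : ℤ)) / 2) *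
              poch q q (((L : ℤ) + A - (s : ℤ)) / 2) * poch q q (s : ℤ))
        else 0 :=
    Finset.sum_filter_of_ne
    (fun s hs hne => by
      by_contra hc
      apply hne
      by_cases hp : ((s:ℤ)+(L:ℤ)+A) % 2 = 0
      · rw [if_pos hp]
        rcases not_and_or.mp hc with h | h
        · exact absurd hp h
        rcases not_and_or.mp (h) with h' | h'
        · push_neg at h'
          rw [poch_q_neg (by omega : ((L:ℤ)-A-(s:ℤ))/2 < 0)]
          simp
        · push_neg at h'
          rw [poch_q_neg (by omega : ((L:ℤ)+A-(s:ℤ))/2 < 0)]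
          simp
      · exact if_neg hp)
  rw [← e1, ← e2]
  refine Finset.sum_nbij' (i := fun j => ((L:ℤ)-2*(j:ℤ)-A).toNat)
    (j := fun s => (((L:ℤ)-A-(s:ℤ))/2).toNat) ?_ ?_ ?_ ?_ ?_
  · intro j hj
    simp only [Finset.mem_filter, Finset.mem_range] at hj ⊢
    omega
  · intro s hs
    simp only [Finset.mem_filter, Finset.mem_range] at hs ⊢
    omega
  · intro j hj
    simp only [Finset.mem_filter, Finset.mem_range] at hj
    omega
  · intro s hs
    simp only [Finset.mem_filter, Finset.mem_range] at hs
    omega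
  · intro j hj
    simp only [Finset.mem_filter, Finset.mem_range] at hj
    have hs : ((((L:ℤ)-2*(j:ℤ)-A).toNat : ℤ)) = (L:ℤ)-2*(j:ℤ)-A := by omega
    rw [if_pos (by omega)]
    have h1 : ((L:ℤ) - A - (((L:ℤ)-2*(j:ℤ)-A).toNat:ℤ)) / 2 = (j:ℤ) := by omega
    have h2 : ((L:ℤ) + A - (((L:ℤ)-2*(j:ℤ)-A).toNat:ℤ)) / 2 = (j:ℤ) + A := by omega
    rw [h1, h2, hs]
    congr 1
    rw [← zpow_natCast t, ← hs]
    congr 1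

end
end
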